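/- There exist a finite connected simple graph G = (V,E), the edge set T ⊆ E of a spanning tree of G in which every tree edge is covered by at least one non-tree edge, and a bijection σ_g : E∖T → {1,…,|E∖T|} that is a greedy ordering — meaning that for every i, the non-tree edge σ_g⁻¹(i) maximizes, among all non-tree edges not in {σ_g⁻¹(1),…,σ_g⁻¹(i−1)}, the number of tree edges it covers that are not covered by any of σ_g⁻¹(1),…,σ_g⁻¹(i−1) — such that ∑_{e∈T} min{σ_g(s) : s ∈ E∖T covers e} ≥ (7/6) · min_σ ∑_{e∈T} min{σ(s) : s ∈ E∖T covers e}, where the minimum on the right is over all bijections σ : E∖T → {1,…,|E∖T|}. In particular, the greedy algorithm does not always find an optimal solution to the Minimum Reconnection Time problem. -/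

import Mathlib

/-- A non-tree edge `s` covers a tree edge `e` with respect to the spanning tree edge
set `T` if the spanning subgraph with edge set `(T ∖ {e}) ∪ {s}` is connected
(equivalently, is again a spanning tree). -/
def covers {V : Type} (T : Set (Sym2 V)) (s e : Sym2 V) : Prop :=
  (SimpleGraph.fromEdgeSet ((T \ {e}) ∪ {s})).Connected

namespace MRTWitness

def Tf : Finset (Sym2 (Fin 5)) := {s(0,1), s(1,2), s(0,3), s(3,4)}
def Sf : Finset (Sym2 (Fin 5)) := {s(1,3), s(0,2), s(0,4)}

def σg : Sym2 (Fin 5) → ℕ := fun x =>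
  if x = s(1,3) then 1 else if x = s(0,2) then 2 else if x = s(0,4) then 3 else 0

def σo : Sym2 (Fin 5) → ℕ := fun x =>
  if x = s(0,2) then 1 else if x = s(0,4) then 2 else if x = s(1,3) then 3 else 0

instance instAdjDec (F : Finset (Sym2 (Fin 5))) :
    DecidableRel (SimpleGraph.fromEdgeSet (↑F : Set (Sym2 (Fin 5)))).Adj := fun a b =>
  decidable_of_iff (s(a, b) ∈ F ∧ a ≠ b) (by rw [SimpleGraph.fromEdgeSet_adj]; simp)

lemma covers_iff (T' : Finset (Sym2 (Fin 5))) (s e : Sym2 (Fin 5)) :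
    covers (↑T') s e ↔
      (SimpleGraph.fromEdgeSet (↑(insert s (T'.erase e)) : Set (Sym2 (Fin 5)))).Preconnected := by
  unfold covers
  have hset : ((↑T' : Set (Sym2 (Fin 5))) \ {e}) ∪ {s} = ↑(insert s (T'.erase e)) := by
    ext x
    simp only [Set.mem_union, Set.mem_diff, Set.mem_singleton_iff, Finset.coe_insert,
      Set.mem_insert_iff, Finset.mem_coe, Finset.mem_erase]
    tauto
  rw [hset, SimpleGraph.connected_iff, and_iff_left ⟨0⟩]

instance decCovers (T' : Finset (Sym2 (Fin 5))) (s e : Sym2 (Fin 5)) :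
    Decidable (covers (↑T') s e) :=
  decidable_of_iff _ (covers_iff T' s e).symm

set_option maxRecDepth 1000000 in
lemma c11 : covers (↑Tf : Set (Sym2 (Fin 5))) s(1,3) s(0,1) := by decide
set_option maxRecDepth 1000000 in
lemma c13 : covers (↑Tf : Set (Sym2 (Fin 5))) s(1,3) s(0,3) := by decide
set_option maxRecDepth 1000000 in
lemma c21 : covers (↑Tf : Set (Sym2 (Fin 5))) s(0,2) s(0,1) := by decide
set_option maxRecDepth 1000000 in
lemma c22 : covers (↑Tf : Set (Sym2 (Fin 5))) s(0,2) s(1,2) := by decide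
set_option maxRecDepth 1000000 in
lemma c33 : covers (↑Tf : Set (Sym2 (Fin 5))) s(0,4) s(0,3) := by decide
set_option maxRecDepth 1000000 in
lemma c34 : covers (↑Tf : Set (Sym2 (Fin 5))) s(0,4) s(3,4) := by decide
set_option maxRecDepth 1000000 in
lemma n12 : ¬ covers (↑Tf : Set (Sym2 (Fin 5))) s(1,3) s(1,2) := by decide
set_option maxRecDepth 1000000 in
lemma n14 : ¬ covers (↑Tf : Set (Sym2 (Fin 5))) s(1,3) s(3,4) := by decide
set_option maxRecDepth 1000000 in
lemma n23 : ¬ covers (↑Tf : Set (Sym2 (Fin 5))) s(0,2) s(0,3) := by decide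
set_option maxRecDepth 1000000 in
lemma n24 : ¬ covers (↑Tf : Set (Sym2 (Fin 5))) s(0,2) s(3,4) := by decide
set_option maxRecDepth 1000000 in
lemma n31 : ¬ covers (↑Tf : Set (Sym2 (Fin 5))) s(0,4) s(0,1) := by decide
set_option maxRecDepth 1000000 in
lemma n32 : ¬ covers (↑Tf : Set (Sym2 (Fin 5))) s(0,4) s(1,2) := by decide

lemma sInf_eq {A : Set ℕ} {k : ℕ} (h1 : k ∈ A) (h2 : ∀ n ∈ A, k ≤ n) : sInf A = k :=
  le_antisymm (Nat.sInf_le h1) (le_csInf ⟨k, h1⟩ h2)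

lemma sum_Tf (f : Sym2 (Fin 5) → ℕ) :
    ∑ e ∈ Tf, f e = f s(0,1) + (f s(1,2) + (f s(0,3) + f s(3,4))) := by
  show ∑ e ∈ insert s(0,1) (insert s(1,2) (insert s(0,3) ({s(3,4)} : Finset (Sym2 (Fin 5))))),
      f e = _
  rw [Finset.sum_insert (by decide), Finset.sum_insert (by decide),
    Finset.sum_insert (by decide), Finset.sum_singleton]

lemma ncard_eq (Q : Sym2 (Fin 5) → Prop) [DecidablePred Q] :
    {e : Sym2 (Fin 5) | e ∈ Tf ∧ Q e}.ncard = (Tf.filter Q).card := by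
  rw [← Set.ncard_coe_finset (Tf.filter Q)]
  congr 1
  ext x
  simp [Finset.mem_filter]

set_option maxRecDepth 1000000 in
lemma hedge : (SimpleGraph.fromEdgeSet (↑(Tf ∪ Sf) : Set (Sym2 (Fin 5)))).edgeSet
    = ↑(Tf ∪ Sf) := by
  rw [SimpleGraph.edgeSet_fromEdgeSet]
  have h : ∀ x ∈ Tf ∪ Sf, ¬ x.IsDiag := by decide
  ext x
  simp only [Set.mem_diff, Set.mem_setOf_eq, Finset.mem_coe]
  exact ⟨fun h' => h'.1, fun hx => ⟨hx, h x hx⟩⟩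

set_option maxRecDepth 1000000 in
lemma bijg : Set.BijOn σg (↑Sf) ((Finset.Icc 1 Sf.card : Finset ℕ) : Set ℕ) := by
  refine ⟨?_, ?_, ?_⟩
  · intro x hx
    rw [Finset.mem_coe] at hx
    rw [Finset.mem_coe]
    fin_cases hx <;> decide
  · intro a ha b hb hab
    rw [Finset.mem_coe] at ha hb
    fin_cases ha <;> fin_cases hb <;> first | rfl | exact absurd hab (by decide)
  · intro n hn
    have hc : Sf.card = 3 := by decide
    rw [hc] at hn
    simp only [Finset.coe_Icc, Set.mem_Icc] at hn
    obtain ⟨h1, h3⟩ := hn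
    interval_cases n
    · exact ⟨s(1,3), Finset.mem_coe.mpr (by decide), by decide⟩
    · exact ⟨s(0,2), Finset.mem_coe.mpr (by decide), by decide⟩
    · exact ⟨s(0,4), Finset.mem_coe.mpr (by decide), by decide⟩

set_option maxRecDepth 1000000 in
lemma bijo : Set.BijOn σo (↑Sf) ((Finset.Icc 1 Sf.card : Finset ℕ) : Set ℕ) := by
  refine ⟨?_, ?_, ?_⟩
  · intro x hx
    rw [Finset.mem_coe] at hx
    rw [Finset.mem_coe]
    fin_cases hx <;> decide
  · intro a ha b hb hab
    rw [Finset.mem_coe] at ha hb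
    fin_cases ha <;> fin_cases hb <;> first | rfl | exact absurd hab (by decide)
  · intro n hn
    have hc : Sf.card = 3 := by decide
    rw [hc] at hn
    simp only [Finset.coe_Icc, Set.mem_Icc] at hn
    obtain ⟨h1, h3⟩ := hn
    interval_cases n
    · exact ⟨s(0,2), Finset.mem_coe.mpr (by decide), by decide⟩
    · exact ⟨s(0,4), Finset.mem_coe.mpr (by decide), by decide⟩
    · exact ⟨s(1,3), Finset.mem_coe.mpr (by decide), by decide⟩

set_option maxRecDepth 1000000 in
lemma sumg :
    ∑ e ∈ Tf, sInf {n : ℕ | ∃ s ∈ Sf, covers (↑Tf : Set (Sym2 (Fin 5))) s e ∧ σg s = n}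
      = 7 := by
  rw [sum_Tf]
  have hA1 : sInf {n : ℕ | ∃ s ∈ Sf, covers (↑Tf : Set (Sym2 (Fin 5))) s s(0,1) ∧ σg s = n}
      = 1 := by
    refine sInf_eq ⟨s(1,3), by decide, c11, by decide⟩ ?_
    rintro n ⟨s, hs, hc, rfl⟩
    fin_cases hs <;> first | decide | exact absurd hc n31
  have hA2 : sInf {n : ℕ | ∃ s ∈ Sf, covers (↑Tf : Set (Sym2 (Fin 5))) s s(1,2) ∧ σg s = n}
      = 2 := by
    refine sInf_eq ⟨s(0,2), by decide, c22, by decide⟩ ?_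
    rintro n ⟨s, hs, hc, rfl⟩
    fin_cases hs <;> first | decide | exact absurd hc n12 | exact absurd hc n32
  have hA3 : sInf {n : ℕ | ∃ s ∈ Sf, covers (↑Tf : Set (Sym2 (Fin 5))) s s(0,3) ∧ σg s = n}
      = 1 := by
    refine sInf_eq ⟨s(1,3), by decide, c13, by decide⟩ ?_
    rintro n ⟨s, hs, hc, rfl⟩
    fin_cases hs <;> first | decide | exact absurd hc n23
  have hA4 : sInf {n : ℕ | ∃ s ∈ Sf, covers (↑Tf : Set (Sym2 (Fin 5))) s s(3,4) ∧ σg s = n}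
      = 3 := by
    refine sInf_eq ⟨s(0,4), by decide, c34, by decide⟩ ?_
    rintro n ⟨s, hs, hc, rfl⟩
    fin_cases hs <;> first | decide | exact absurd hc n14 | exact absurd hc n24
  rw [hA1, hA2, hA3, hA4]

set_option maxRecDepth 1000000 in
lemma sumo :
    ∑ e ∈ Tf, sInf {n : ℕ | ∃ s ∈ Sf, covers (↑Tf : Set (Sym2 (Fin 5))) s e ∧ σo s = n}
      = 6 := by
  rw [sum_Tf]
  have hB1 : sInf {n : ℕ | ∃ s ∈ Sf, covers (↑Tf : Set (Sym2 (Fin 5))) s s(0,1) ∧ σo s = n}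
      = 1 := by
    refine sInf_eq ⟨s(0,2), by decide, c21, by decide⟩ ?_
    rintro n ⟨s, hs, hc, rfl⟩
    fin_cases hs <;> first | decide | exact absurd hc n31
  have hB2 : sInf {n : ℕ | ∃ s ∈ Sf, covers (↑Tf : Set (Sym2 (Fin 5))) s s(1,2) ∧ σo s = n}
      = 1 := by
    refine sInf_eq ⟨s(0,2), by decide, c22, by decide⟩ ?_
    rintro n ⟨s, hs, hc, rfl⟩
    fin_cases hs <;> first | decide | exact absurd hc n12 | exact absurd hc n32
  have hB3 : sInf {n : ℕ | ∃ s ∈ Sf, covers (↑Tf : Set (Sym2 (Fin 5))) s s(0,3) ∧ σo s = n}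
      = 2 := by
    refine sInf_eq ⟨s(0,4), by decide, c33, by decide⟩ ?_
    rintro n ⟨s, hs, hc, rfl⟩
    fin_cases hs <;> first | decide | exact absurd hc n23
  have hB4 : sInf {n : ℕ | ∃ s ∈ Sf, covers (↑Tf : Set (Sym2 (Fin 5))) s s(3,4) ∧ σo s = n}
      = 2 := by
    refine sInf_eq ⟨s(0,4), by decide, c34, by decide⟩ ?_
    rintro n ⟨s, hs, hc, rfl⟩
    fin_cases hs <;> first | decide | exact absurd hc n14 | exact absurd hc n24
  rw [hB1, hB2, hB3, hB4]

end MRTWitness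

open MRTWitness in
set_option maxRecDepth 1000000 in
/-- There is a finite connected graph with a spanning tree, every tree edge covered by
some non-tree edge, and a greedy ordering `σg` of the non-tree edges (at each step a
remaining non-tree edge covering the most not-yet-covered tree edges is chosen) whose
MRT objective is at least `7/6` times the optimum over all orderings. -/
theorem stmt_15 :
    ∃ (V : Type) (_ : Fintype V) (G : SimpleGraph V)
      (T S : Finset (Sym2 V)) (σg : Sym2 V → ℕ),
      G.Connected ∧ (T : Set (Sym2 V)) ⊆ G.edgeSet ∧
      (SimpleGraph.fromEdgeSet (T : Set (Sym2 V))).IsTree ∧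
      (S : Set (Sym2 V)) = G.edgeSet \ (T : Set (Sym2 V)) ∧
      (∀ e ∈ T, ∃ s ∈ S, covers (T : Set (Sym2 V)) s e) ∧
      Set.BijOn σg (S : Set (Sym2 V)) ((Finset.Icc 1 S.card : Finset ℕ) : Set ℕ) ∧
      (∀ i ∈ Finset.Icc 1 S.card, ∀ g ∈ S, σg g = i → ∀ s ∈ S, i ≤ σg s →
        {e : Sym2 V | e ∈ T ∧ covers (T : Set (Sym2 V)) s e ∧
            ∀ s' ∈ S, σg s' < i → ¬ covers (T : Set (Sym2 V)) s' e}.ncard ≤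
          {e : Sym2 V | e ∈ T ∧ covers (T : Set (Sym2 V)) g e ∧
            ∀ s' ∈ S, σg s' < i → ¬ covers (T : Set (Sym2 V)) s' e}.ncard) ∧
      7 * sInf {m : ℕ | ∃ σ : Sym2 V → ℕ,
            Set.BijOn σ (S : Set (Sym2 V)) ((Finset.Icc 1 S.card : Finset ℕ) : Set ℕ) ∧
            m = ∑ e ∈ T, sInf {n : ℕ |
                  ∃ s ∈ S, covers (T : Set (Sym2 V)) s e ∧ σ s = n}} ≤
        6 * ∑ e ∈ T, sInf {n : ℕ | ∃ s ∈ S, covers (T : Set (Sym2 V)) s e ∧ σg s = n} := by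
  refine ⟨Fin 5, inferInstance,
    SimpleGraph.fromEdgeSet (↑(Tf ∪ Sf) : Set (Sym2 (Fin 5))), Tf, Sf, MRTWitness.σg,
    ?_, ?_, ?_, ?_, ?_, ?_, ?_, ?_⟩
  case _ =>
    rw [SimpleGraph.connected_iff]
    exact ⟨by decide, ⟨0⟩⟩
  case _ =>
    rw [hedge]
    exact Finset.coe_subset.mpr Finset.subset_union_left
  case _ =>
    constructor
    · rw [SimpleGraph.connected_iff]
      exact ⟨by decide, ⟨0⟩⟩
    · have key : ∀ v w : Fin 5,
          (SimpleGraph.fromEdgeSet (↑Tf : Set (Sym2 (Fin 5)))).Adj v w →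
          ¬ (SimpleGraph.fromEdgeSet (↑(Tf.erase s(v,w)) : Set (Sym2 (Fin 5)))).Reachable v w := by
        decide
      rw [SimpleGraph.isAcyclic_iff_forall_adj_isBridge]
      intro v w h
      rw [SimpleGraph.isBridge_iff]
      refine fun hr => key v w h ?_
      have hEq : (SimpleGraph.fromEdgeSet (↑Tf : Set (Sym2 (Fin 5)))
            \ SimpleGraph.fromEdgeSet {s(v,w)})
          = SimpleGraph.fromEdgeSet (↑(Tf.erase s(v,w)) : Set (Sym2 (Fin 5))) := by
        ext a b
        simp only [SimpleGraph.sdiff_adj, SimpleGraph.fromEdgeSet_adj, Finset.coe_erase,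
          Set.mem_diff, Set.mem_singleton_iff, Finset.mem_coe]
        tauto
      rw [SimpleGraph.deleteEdges, hEq] at hr
      exact hr
  case _ =>
    rw [hedge, ← Finset.coe_sdiff]
    exact Finset.coe_inj.mpr (by decide)
  case _ =>
    intro e he
    fin_cases he
    · exact ⟨s(1,3), by decide, c11⟩
    · exact ⟨s(0,2), by decide, c22⟩
    · exact ⟨s(1,3), by decide, c13⟩
    · exact ⟨s(0,4), by decide, c34⟩
  case _ =>
    exact bijg
  case _ =>
    intro i hi g hg hgi s hs hsi
    subst hgi
    fin_cases hg <;> fin_cases hs <;>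
      first
        | exact le_rfl
        | exact absurd hsi (by decide)
        | (rw [ncard_eq, ncard_eq]; decide)
  case _ =>
    rw [sumg]
    have h6 : (6 : ℕ) ∈ {m : ℕ | ∃ σ : Sym2 (Fin 5) → ℕ,
        Set.BijOn σ (↑Sf) ((Finset.Icc 1 Sf.card : Finset ℕ) : Set ℕ) ∧
        m = ∑ e ∈ Tf, sInf {n : ℕ |
              ∃ s ∈ Sf, covers (↑Tf : Set (Sym2 (Fin 5))) s e ∧ σ s = n}} :=
      ⟨σo, bijo, sumo.symm⟩
    calc 7 * sInf _ ≤ 7 * 6 := Nat.mul_le_mul_left 7 (Nat.sInf_le h6)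
      _ ≤ 6 * 7 := by norm_num
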